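/- For any L ∈ ℝ^{2N×2N}, any R ∈ ℝ^{N×N}, and any ε > 0, the matrix A(L,R) := 2(M₁₁ + M₂₂ + R - Rᵀ)⁻¹ M₂₁ is well-defined (the inverse exists) and Schur stable, where M = LLᵀ + εI is partitioned into N×N blocks M = [[M₁₁, M₁₂],[M₂₁, M₂₂]]. -/

import Mathlib

open Matrix

variable {n : Type*} [Fintype n] [DecidableEq n]

lemma re_quad (M : Matrix n n ℝ) (w : n → ℂ) :
    (star w ⬝ᵥ (M.map Complex.ofReal) *ᵥ w).re
      = (fun i => (w i).re) ⬝ᵥ M *ᵥ (fun i => (w i).re)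
        + (fun i => (w i).im) ⬝ᵥ M *ᵥ (fun i => (w i).im) := by
  simp only [dotProduct, mulVec, map_apply, Pi.star_apply, Finset.mul_sum, Complex.re_sum]
  rw [← Finset.sum_add_distrib]
  refine Finset.sum_congr rfl fun i _ => ?_
  rw [← Finset.sum_add_distrib]
  refine Finset.sum_congr rfl fun j _ => ?_
  simp only [RCLike.star_def, Complex.mul_re, Complex.conj_re, Complex.conj_im, Complex.mul_im,
    Complex.ofReal_re, Complex.ofReal_im]
  ring

lemma conj_quad (B : Matrix n n ℝ) (x y : n → ℂ) :
    star x ⬝ᵥ ((Bᵀ).map Complex.ofReal) *ᵥ y = starRingEnd ℂ (star y ⬝ᵥ (B.map Complex.ofReal) *ᵥ x) := by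
  have h1 : starRingEnd ℂ (star y ⬝ᵥ (B.map Complex.ofReal) *ᵥ x)
      = star ((B.map Complex.ofReal) *ᵥ x) ⬝ᵥ y := by
    rw [star_dotProduct, starRingEnd_apply, star_star]
  have h2 : ((B.map Complex.ofReal))ᴴ = (Bᵀ).map Complex.ofReal := by
    ext i j
    simp [conjTranspose_apply]
  rw [h1, star_mulVec, ← dotProduct_mulVec, h2]

lemma key {N : ℕ} {M : Matrix (Fin N ⊕ Fin N) (Fin N ⊕ Fin N) ℝ} (hM : M.PosDef)
    (x y : Fin N → ℂ) (hxy : ¬(x = 0 ∧ y = 0)) :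
    0 < (star x ⬝ᵥ (M.toBlocks₁₁.map Complex.ofReal) *ᵥ x).re
      + (star y ⬝ᵥ (M.toBlocks₂₂.map Complex.ofReal) *ᵥ y).re
      + 2 * (star y ⬝ᵥ (M.toBlocks₂₁.map Complex.ofReal) *ᵥ x).re := by
  set w : Fin N ⊕ Fin N → ℂ := Sum.elim x y with hw
  have hwne : w ≠ 0 := by
    intro h
    apply hxy
    constructor
    · funext i; simpa [hw] using congrFun h (Sum.inl i)
    · funext i; simpa [hw] using congrFun h (Sum.inr i)
  -- transpose symmetry
  have hsym : Mᵀ = M := by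
    have := hM.isHermitian
    rwa [IsHermitian, conjTranspose_eq_transpose_of_trivial] at this
  have hM12 : M.toBlocks₁₂ = (M.toBlocks₂₁)ᵀ := by
    ext i j
    have : M (Sum.inl i) (Sum.inr j) = Mᵀ (Sum.inl i) (Sum.inr j) := by rw [hsym]
    simpa [toBlocks₁₂, toBlocks₂₁, transpose_apply] using this
  have hstar : star w = Sum.elim (star x) (star y) := by
    funext i; cases i <;> rfl
  have hdecomp : (star w ⬝ᵥ (M.map Complex.ofReal) *ᵥ w).re
      = (star x ⬝ᵥ (M.toBlocks₁₁.map Complex.ofReal) *ᵥ x).re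
        + (star y ⬝ᵥ (M.toBlocks₂₂.map Complex.ofReal) *ᵥ y).re
        + 2 * (star y ⬝ᵥ (M.toBlocks₂₁.map Complex.ofReal) *ᵥ x).re := by
    conv_lhs => rw [← fromBlocks_toBlocks M]
    rw [fromBlocks_map, hw, hstar, fromBlocks_mulVec, sumElim_dotProduct_sumElim,
      dotProduct_add, dotProduct_add, hM12, conj_quad]
    simp only [Sum.elim_comp_inl, Sum.elim_comp_inr, Complex.add_re, Complex.conj_re]
    ring
  rw [← hdecomp, re_quad]
  set a : Fin N ⊕ Fin N → ℝ := fun i => (w i).re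
  set b : Fin N ⊕ Fin N → ℝ := fun i => (w i).im
  have hab : a ≠ 0 ∨ b ≠ 0 := by
    by_contra h
    push_neg at h
    apply hwne
    funext i
    have ha := congrFun h.1 i
    have hb := congrFun h.2 i
    exact Complex.ext (by simpa using ha) (by simpa using hb)
  have hsd := hM.posSemidef
  rcases hab with h | h
  · have h1 : 0 < a ⬝ᵥ M *ᵥ a := by simpa using hM.dotProduct_mulVec_pos h
    have h2 : 0 ≤ b ⬝ᵥ M *ᵥ b := by simpa using hsd.dotProduct_mulVec_nonneg b
    linarith
  · have h1 : 0 ≤ a ⬝ᵥ M *ᵥ a := by simpa using hsd.dotProduct_mulVec_nonneg a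
    have h2 : 0 < b ⬝ᵥ M *ᵥ b := by simpa using hM.dotProduct_mulVec_pos h
    linarith

lemma mapc_mul {m : Type*} [Fintype m] (A B : Matrix m m ℝ) :
    (A * B).map Complex.ofReal = A.map Complex.ofReal * B.map Complex.ofReal := by
  ext i j
  simp [Matrix.mul_apply]

set_option maxHeartbeats 1000000 in
def SchurStable {N : ℕ} (A : Matrix (Fin N) (Fin N) ℝ) : Prop :=
  ∀ μ ∈ spectrum ℂ (A.map Complex.ofReal), ‖μ‖ < 1

set_option maxHeartbeats 1000000 in
theorem stmt15 {N : ℕ} (L : Matrix (Fin N ⊕ Fin N) (Fin N ⊕ Fin N) ℝ)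
    (R : Matrix (Fin N) (Fin N) ℝ) (ε : ℝ) (hε : 0 < ε) :
    let M := L * Lᵀ + ε • (1 : Matrix (Fin N ⊕ Fin N) (Fin N ⊕ Fin N) ℝ);
    IsUnit (M.toBlocks₁₁ + M.toBlocks₂₂ + R - Rᵀ).det ∧
      SchurStable ((2 : ℝ) • ((M.toBlocks₁₁ + M.toBlocks₂₂ + R - Rᵀ)⁻¹ * M.toBlocks₂₁)) := by
  intro M
  have hM : M.PosDef := by
    have h1 : (L * Lᵀ).PosSemidef := by
      have := posSemidef_conjTranspose_mul_self (Lᵀ)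
      rwa [conjTranspose_eq_transpose_of_trivial, transpose_transpose] at this
    have h2 : (ε • (1 : Matrix (Fin N ⊕ Fin N) (Fin N ⊕ Fin N) ℝ)).PosDef := by
      have hd : ε • (1 : Matrix (Fin N ⊕ Fin N) (Fin N ⊕ Fin N) ℝ)
          = Matrix.diagonal (fun _ => ε) := by
        ext i j
        by_cases h : i = j <;> simp [Matrix.one_apply, Matrix.diagonal, h]
      rw [hd]
      exact posDef_diagonal_iff.mpr fun _ => hε
    exact Matrix.PosDef.posSemidef_add h1 h2
  set Q := M.toBlocks₁₁ with hQdef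
  set P := M.toBlocks₂₂ with hPdef
  set F := M.toBlocks₂₁ with hFdef
  set E : Matrix (Fin N) (Fin N) ℝ := Q + P + R - Rᵀ with hEdef
  -- real positivity of Q and P quadratic forms (via complex key, specialized)
  have hQpos : ∀ v : Fin N → ℝ, v ≠ 0 → 0 < v ⬝ᵥ Q *ᵥ v := by
    intro v hv
    have hvc : (fun i => (v i : ℂ)) ≠ 0 := by
      intro h; apply hv; funext i
      simpa using congrFun h i
    have := key hM (fun i => (v i : ℂ)) 0 (by tauto)
    simp only [star_zero, zero_dotProduct, dotProduct_zero, mulVec_zero, Complex.zero_re,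
      mul_zero, add_zero] at this
    have ha : (fun i => ((v i : ℂ)).re) = v := by funext i; simp
    have hb : (fun i => ((v i : ℂ)).im) = (0 : Fin N → ℝ) := by funext i; simp
    rw [re_quad, ha, hb] at this
    simpa using this
  have hPpos : ∀ v : Fin N → ℝ, v ≠ 0 → 0 < v ⬝ᵥ P *ᵥ v := by
    intro v hv
    have hvc : (fun i => (v i : ℂ)) ≠ 0 := by
      intro h; apply hv; funext i
      simpa using congrFun h i
    have := key hM 0 (fun i => (v i : ℂ)) (by tauto)
    simp only [star_zero, zero_dotProduct, dotProduct_zero, mulVec_zero, Complex.zero_re,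
      mul_zero, add_zero, zero_add] at this
    have ha : (fun i => ((v i : ℂ)).re) = v := by funext i; simp
    have hb : (fun i => ((v i : ℂ)).im) = (0 : Fin N → ℝ) := by funext i; simp
    rw [re_quad, ha, hb] at this
    simpa using this
  -- skew part vanishes on the real diagonal
  have hskew : ∀ v : Fin N → ℝ, v ⬝ᵥ (R - Rᵀ) *ᵥ v = 0 := by
    intro v
    rw [sub_mulVec, dotProduct_sub, mulVec_transpose, dotProduct_mulVec, dotProduct_comm,
      sub_self]
  have hdet : IsUnit E.det := by
    rw [isUnit_iff_ne_zero]
    intro h0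
    obtain ⟨v, hv, hv0⟩ := (Matrix.exists_mulVec_eq_zero_iff).mpr h0
    have : 0 < v ⬝ᵥ E *ᵥ v := by
      have : E = (Q + P) + (R - Rᵀ) := by rw [hEdef, add_sub_assoc]
      rw [this, add_mulVec, dotProduct_add, hskew, add_zero, add_mulVec, dotProduct_add]
      exact add_pos (hQpos v hv) (hPpos v hv)
    rw [hv0, dotProduct_zero] at this
    exact lt_irrefl 0 this
  refine ⟨hdet, ?_⟩
  -- Schur stability
  intro μ hμ
  set Ec := E.map Complex.ofReal with hEc
  set Fc := F.map Complex.ofReal with hFc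
  set Qc := Q.map Complex.ofReal with hQc
  set Pc := P.map Complex.ofReal with hPc
  set Ac := (((2:ℝ) • (E⁻¹ * F)).map Complex.ofReal) with hAc
  have hEAr : E * ((2:ℝ) • (E⁻¹ * F)) = (2:ℝ) • F := by
    rw [show E * ((2:ℝ) • (E⁻¹ * F)) = (2:ℝ) • (E * (E⁻¹ * F)) from Matrix.mul_smul _ _ _,
      ← Matrix.mul_assoc, Matrix.mul_nonsing_inv _ hdet, Matrix.one_mul]
  have hsmulmap : ∀ (B : Matrix (Fin N) (Fin N) ℝ),
      ((2:ℝ) • B).map Complex.ofReal = (2:ℂ) • (B.map Complex.ofReal) := by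
    intro B; ext i j; simp
  have hEA : Ec * Ac = (2:ℂ) • Fc := by
    rw [hEc, hAc, ← mapc_mul, hEAr, hFc, hsmulmap]
  -- eigenvector
  obtain ⟨v, hv1, hv0⟩ : ∃ v : Fin N → ℂ, Ac *ᵥ v = μ • v ∧ v ≠ 0 := by
    have hsp : μ ∈ spectrum ℂ (Matrix.toLin' Ac) := by
      rwa [show Matrix.toLin' Ac = Matrix.toLinAlgEquiv' Ac from rfl,
        AlgEquiv.spectrum_eq Matrix.toLinAlgEquiv' Ac]
    have hev := (Module.End.hasEigenvalue_iff_mem_spectrum).mpr hsp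
    obtain ⟨v, hv⟩ := hev.exists_hasEigenvector
    exact ⟨v, by rw [← Matrix.toLin'_apply]; exact hv.apply_eq_smul, hv.right⟩
  have hFv : Fc *ᵥ v = (μ / 2) • (Ec *ᵥ v) := by
    have h1 : Ec *ᵥ (Ac *ᵥ v) = (2:ℂ) • (Fc *ᵥ v) := by
      rw [mulVec_mulVec, hEA, smul_mulVec]
    rw [hv1, mulVec_smul] at h1
    have h2 : (2:ℂ)⁻¹ • ((2:ℂ) • (Fc *ᵥ v)) = (2:ℂ)⁻¹ • (μ • (Ec *ᵥ v)) := by rw [h1]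
    rwa [smul_smul, smul_smul, inv_mul_cancel₀ (two_ne_zero), one_smul,
      show (2:ℂ)⁻¹ * μ = μ / 2 by ring] at h2
  set q : ℝ := (star v ⬝ᵥ Qc *ᵥ v).re with hq'
  set p : ℝ := (star v ⬝ᵥ Pc *ᵥ v).re with hp'
  set f : ℂ := star v ⬝ᵥ Fc *ᵥ v with hf'
  set e : ℂ := star v ⬝ᵥ Ec *ᵥ v with he'
  have hfe : f = (μ / 2) * e := by
    rw [hf', hFv, dotProduct_smul, smul_eq_mul, he']
  have hq : 0 < q := by
    have := key hM v 0 (by tauto)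
    simpa [hQc] using this
  have hp : 0 < p := by
    have := key hM 0 v (by tauto)
    simpa [hPc] using this
  have here : e.re = q + p := by
    have hEsplit : Ec = Qc + Pc + (R.map Complex.ofReal) - ((Rᵀ).map Complex.ofReal) := by
      rw [hEc, hEdef, hQc, hPc]; ext i j; simp
    have hRre : (star v ⬝ᵥ ((Rᵀ).map Complex.ofReal) *ᵥ v).re
        = (star v ⬝ᵥ (R.map Complex.ofReal) *ᵥ v).re := by
      rw [conj_quad]; exact Complex.conj_re _
    rw [he', hEsplit, sub_mulVec, add_mulVec, add_mulVec, dotProduct_sub, dotProduct_add,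
      dotProduct_add, Complex.sub_re, Complex.add_re, Complex.add_re, hRre]
    rw [hq', hp']; ring
  have hmain : ∀ c : ℂ, 0 < q + Complex.normSq c * p + 2 * (starRingEnd ℂ c * f).re := by
    intro c
    have := key hM v (c • v) (by tauto)
    rw [star_smul, smul_dotProduct, mulVec_smul, dotProduct_smul, smul_dotProduct,
      smul_eq_mul, smul_eq_mul, smul_eq_mul] at this
    simp only [RCLike.star_def] at this
    have hcc : (starRingEnd ℂ c) * (c * (star v ⬝ᵥ Pc *ᵥ v)) = (Complex.normSq c : ℂ) * (star v ⬝ᵥ Pc *ᵥ v) := by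
      rw [← mul_assoc, mul_comm (starRingEnd ℂ c) c, Complex.mul_conj]
    rw [hcc, Complex.re_ofReal_mul] at this
    rw [hq', hp', hf']
    linarith [this]
  -- choose c := -(f / p)
  have hineq : Complex.normSq f < q * p := by
    have h := hmain (-(f / (p:ℂ)))
    have hpne : (p:ℂ) ≠ 0 := by
      simpa using ne_of_gt hp
    have h1 : Complex.normSq (-(f / (p:ℂ))) = Complex.normSq f / (p * p) := by
      rw [Complex.normSq_neg, Complex.normSq_div, Complex.normSq_ofReal]
    have h2 : (starRingEnd ℂ (-(f / (p:ℂ))) * f).re = -(Complex.normSq f / p) := by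
      rw [map_neg, map_div₀, Complex.conj_ofReal, neg_mul, div_mul_eq_mul_div,
        mul_comm, Complex.mul_conj]
      rw [show ((Complex.normSq f : ℂ) / (p:ℂ)) = ((Complex.normSq f / p : ℝ) : ℂ) by
        rw [Complex.ofReal_div]]
      simp
    rw [h1, h2] at h
    have hppos := hp
    have : 0 < q - Complex.normSq f / p := by
      have hpne' : p ≠ 0 := ne_of_gt hp
      field_simp at h ⊢
      nlinarith
    have hpne' : p ≠ 0 := ne_of_gt hp
    nlinarith [div_mul_cancel₀ (Complex.normSq f) hpne']
  -- wrap up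
  have hnf : Complex.normSq f = Complex.normSq μ / 4 * Complex.normSq e := by
    rw [hfe, Complex.normSq_mul, Complex.normSq_div]
    norm_num
  have hre : (q + p) ^ 2 ≤ Complex.normSq e := by
    rw [Complex.normSq_apply, ← here]
    nlinarith [sq_nonneg e.im]
  have hepos : 0 < Complex.normSq e := lt_of_lt_of_le (pow_pos (by linarith) 2) hre
  have hμ1 : Complex.normSq μ < 1 := by
    have h4 : Complex.normSq μ * Complex.normSq e < Complex.normSq e := by
      nlinarith [sq_nonneg (q - p)]
    exact (mul_lt_iff_lt_one_left hepos).mp h4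
  have : ‖μ‖ ^ 2 = Complex.normSq μ := Complex.sq_norm μ
  nlinarith [norm_nonneg μ]
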